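/- Let η > 0, τ > 0, d > 0 and T > η + d. Then ∫_{-∞}^{∞} (e^{i r T}/(r² + τ²)) g(r; η) sin(d r) dr = −(π/(iτ)) e^{-τ T} g(iτ; η) sinh(τ d), where g(·; η) is evaluated at the purely imaginary point iτ via its entire extension. -/

import Mathlib

open MeasureTheory

/-- The entire (for `z ≠ 0`; the singularity at `0` is removable) function
`g(z; η) = (2/(η z⁴))(1 − cos(η z)) − sin(η z)/z³`. -/
noncomputable def gC (η : ℝ) (z : ℂ) : ℂ :=
  (2 / ((η : ℂ) * z ^ 4)) * (1 - Complex.cos ((η : ℂ) * z)) -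
    Complex.sin ((η : ℂ) * z) / z ^ 3

namespace Complex

noncomputable def abs : AbsoluteValue ℂ ℝ := NormedField.toAbsoluteValue ℂ

lemma norm_eq_abs (z : ℂ) : ‖z‖ = Complex.abs z := rfl

lemma abs_ofReal (x : ℝ) : Complex.abs (x : ℂ) = |x| := Complex.norm_real x

lemma abs_I : Complex.abs I = 1 := Complex.norm_I

lemma abs_two : Complex.abs 2 = 2 := Complex.norm_two

@[simp] lemma abs_ofNat (n : ℕ) [n.AtLeastTwo] :
    Complex.abs (OfNat.ofNat n : ℂ) = OfNat.ofNat n := by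
  change ‖(OfNat.ofNat n : ℂ)‖ = _
  simp

lemma abs_exp (z : ℂ) : Complex.abs (exp z) = Real.exp z.re := Complex.norm_exp z

lemma abs_im_le_abs (z : ℂ) : |z.im| ≤ Complex.abs z := Complex.abs_im_le_norm z

lemma abs_re_le_abs (z : ℂ) : |z.re| ≤ Complex.abs z := Complex.abs_re_le_norm z

end Complex

section Aux

open Filter Topology Set

lemma integrable_of_decay (F : ℂ → ℂ) (C : ℝ)
    (hcont : Continuous fun r : ℝ => F (r : ℂ))
    (hC : ∀ z : ℂ, 0 ≤ z.im → ‖F z‖ ≤ C / (1 + Complex.abs z ^ 2)) :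
    Integrable fun r : ℝ => F (r : ℂ) := by
  refine (integrable_inv_one_add_sq.const_mul C).mono' hcont.aestronglyMeasurable ?_
  filter_upwards with r
  have h := hC r (by simp)
  simpa [Complex.abs_ofReal, sq_abs, div_eq_mul_inv] using h

lemma contour_vanish (F : ℂ → ℂ) (ε C : ℝ) (hε : 0 < ε)
    (hd : ∀ z : ℂ, -ε < z.im → DifferentiableAt ℂ F z)
    (hC : ∀ z : ℂ, 0 ≤ z.im → ‖F z‖ ≤ C / (1 + Complex.abs z ^ 2)) :
    ∫ r : ℝ, F (r : ℂ) = 0 := by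
  have hC0 : 0 ≤ C := by
    have h := (norm_nonneg (F 0)).trans (hC 0 (by simp))
    simpa using h
  have hcont : Continuous fun r : ℝ => F (r : ℂ) := by
    refine continuous_iff_continuousAt.2 fun r => ?_
    exact (hd r (by simp [hε])).continuousAt.comp Complex.continuous_ofReal.continuousAt
  have hInt : Integrable fun r : ℝ => F (r : ℂ) := integrable_of_decay F C hcont hC
  have key : ∀ R : ℝ, 1 ≤ R → ‖∫ x in (-R)..R, F (x : ℂ)‖ ≤ 4 * C / R := by
    intro R hR
    have h0R : (0:ℝ) < R := by linarith
    have hR2 : (0:ℝ) < R ^ 2 := by positivity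
    have habs : ∀ z : ℂ, 0 ≤ z.im → R ≤ Complex.abs z → ‖F z‖ ≤ C / R ^ 2 := by
      intro z him hza
      refine (hC z him).trans ?_
      refine div_le_div_of_nonneg_left hC0 hR2 ?_
      nlinarith [Complex.abs.nonneg z]
    have rect := Complex.integral_boundary_rect_eq_zero_of_differentiableOn F
      ((-R : ℝ) : ℂ) ((R : ℝ) + R * Complex.I) ?_
    · have hzre : (((-R : ℝ) : ℂ)).re = -R := by simp
      have hzim : (((-R : ℝ) : ℂ)).im = 0 := by simp
      have hwre : (((R : ℝ) : ℂ) + R * Complex.I).re = R := by simp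
      have hwim : (((R : ℝ) : ℂ) + R * Complex.I).im = R := by simp
      rw [hzre, hzim, hwre, hwim] at rect
      simp only [Complex.ofReal_zero, zero_mul, add_zero] at rect
      have heq : ∫ x in (-R)..R, F (x : ℂ) =
          (∫ x in (-R)..R, F (x + R * Complex.I)) -
            Complex.I • (∫ y in (0:ℝ)..R, F (R + y * Complex.I)) +
            Complex.I • (∫ y in (0:ℝ)..R, F (((-R : ℝ) : ℂ) + y * Complex.I)) := by
        linear_combination rect
      rw [heq]
      have htop : ‖∫ x in (-R)..R, F (x + R * Complex.I)‖ ≤ C / R ^ 2 * |R - (-R)| := by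
        refine intervalIntegral.norm_integral_le_of_norm_le_const fun x hx => ?_
        have hzi : ((x : ℂ) + R * Complex.I).im = R := by simp
        refine habs _ (by rw [hzi]; exact h0R.le) ?_
        have h2 := Complex.abs_im_le_abs ((x : ℂ) + R * Complex.I)
        rw [hzi] at h2
        exact (le_abs_self R).trans h2
      have hside : ∀ a : ℝ, |a| = R →
          ‖∫ y in (0:ℝ)..R, F ((a : ℂ) + y * Complex.I)‖ ≤ C / R ^ 2 * |R - 0| := by
        intro a ha
        refine intervalIntegral.norm_integral_le_of_norm_le_const fun y hy => ?_
        rw [Set.uIoc_of_le h0R.le] at hy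
        have hzi : ((a : ℂ) + y * Complex.I).im = y := by simp
        have hzr : ((a : ℂ) + y * Complex.I).re = a := by simp
        refine habs _ (by rw [hzi]; exact hy.1.le) ?_
        have h2 := Complex.abs_re_le_abs ((a : ℂ) + y * Complex.I)
        rw [hzr, ha] at h2
        exact h2
      have h1 := hside R (abs_of_pos h0R)
      have h2 := hside (-R) (by rw [abs_neg]; exact abs_of_pos h0R)
      calc ‖(∫ x in (-R)..R, F (x + R * Complex.I)) -
            Complex.I • (∫ y in (0:ℝ)..R, F (R + y * Complex.I)) +
            Complex.I • (∫ y in (0:ℝ)..R, F (((-R : ℝ) : ℂ) + y * Complex.I))‖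
          ≤ ‖(∫ x in (-R)..R, F (x + R * Complex.I)) -
            Complex.I • (∫ y in (0:ℝ)..R, F (R + y * Complex.I))‖ +
            ‖Complex.I • (∫ y in (0:ℝ)..R, F (((-R : ℝ) : ℂ) + y * Complex.I))‖ :=
          norm_add_le _ _
        _ ≤ ‖∫ x in (-R)..R, F (x + R * Complex.I)‖ +
            ‖Complex.I • (∫ y in (0:ℝ)..R, F (R + y * Complex.I))‖ +
            ‖Complex.I • (∫ y in (0:ℝ)..R, F (((-R : ℝ) : ℂ) + y * Complex.I))‖ := by
          gcongr
          exact norm_sub_le _ _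
        _ ≤ C / R ^ 2 * |R - (-R)| + C / R ^ 2 * |R - 0| + C / R ^ 2 * |R - 0| := by
          rw [norm_smul, norm_smul, Complex.norm_I, one_mul, one_mul]
          gcongr
        _ ≤ 4 * C / R := by
          rw [abs_of_pos (by linarith : (0:ℝ) < R - (-R)), sub_zero, abs_of_pos h0R]
          rw [div_mul_eq_mul_div, div_mul_eq_mul_div, ← add_div, ← add_div]
          apply le_of_eq
          field_simp
          ring
    · intro z hz
      rw [Complex.mem_reProdIm] at hz
      refine (hd z ?_).differentiableWithinAt
      have : z.im ∈ Set.uIcc (((-R : ℝ) : ℂ)).im (((R : ℝ) : ℂ) + R * Complex.I).im := hz.2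
      simp only [Complex.ofReal_neg, Complex.neg_im, Complex.ofReal_im, neg_zero,
        Complex.add_im, Complex.mul_im, Complex.I_im, Complex.ofReal_re, Complex.I_re,
        Complex.ofReal_im, mul_zero, mul_one, zero_add, add_zero] at this
      rw [Set.uIcc_of_le h0R.le] at this
      linarith [this.1]
  have t1 := MeasureTheory.intervalIntegral_tendsto_integral (μ := volume) hInt
    tendsto_neg_atTop_atBot tendsto_id
  have t2 : Tendsto (fun R : ℝ => 4 * C / R) atTop (𝓝 0) :=
    tendsto_const_nhds.div_atTop tendsto_id
  have hle : ‖∫ r : ℝ, F (r : ℂ)‖ ≤ 0 :=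
    le_of_tendsto_of_tendsto t1.norm t2 (eventually_atTop.2 ⟨1, key⟩)
  simpa using norm_le_zero_iff.mp hle

lemma phi_bound (u : ℂ) (hu : Complex.abs u ≤ 1) :
    Complex.abs (2 - Complex.exp u - Complex.exp (-u)
      + u / 2 * (Complex.exp u - Complex.exp (-u))) ≤ Complex.abs u ^ 4 := by
  have h4 : (0:ℕ) < 4 := by norm_num
  have hA := Complex.exp_bound hu h4
  have hB := Complex.exp_bound (x := -u) (by simpa [Complex.norm_eq_abs] using hu) h4
  have hPsum : ∀ x : ℂ, ∑ m ∈ Finset.range 4, x ^ m / m.factorial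
      = 1 + x + x ^ 2 / 2 + x ^ 3 / 6 := by
    intro x
    simp [Finset.sum_range_succ, Nat.factorial]
  rw [hPsum] at hA hB
  simp only [Complex.norm_eq_abs] at hA hB
  set A : ℂ := Complex.exp u - (1 + u + u ^ 2 / 2 + u ^ 3 / 6) with hAdef
  set B : ℂ := Complex.exp (-u) - (1 + (-u) + (-u) ^ 2 / 2 + (-u) ^ 3 / 6) with hBdef
  have key : 2 - Complex.exp u - Complex.exp (-u)
      + u / 2 * (Complex.exp u - Complex.exp (-u))
      = u ^ 4 / 6 - A - B + u / 2 * (A - B) := by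
    rw [hAdef, hBdef]; ring
  rw [key]
  have hA' : Complex.abs A ≤ Complex.abs u ^ 4 * (5 / 96) := by
    convert hA using 2
    · norm_num [Nat.factorial]
  have hB' : Complex.abs B ≤ Complex.abs u ^ 4 * (5 / 96) := by
    have := hB
    rw [map_neg_eq_map] at this
    convert this using 2
    · norm_num [Nat.factorial]
  have tri : Complex.abs (u ^ 4 / 6 - A - B + u / 2 * (A - B))
      ≤ Complex.abs u ^ 4 / 6 + Complex.abs A + Complex.abs B
        + Complex.abs u / 2 * (Complex.abs A + Complex.abs B) := by
    calc Complex.abs (u ^ 4 / 6 - A - B + u / 2 * (A - B))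
        ≤ Complex.abs (u ^ 4 / 6 - A - B) + Complex.abs (u / 2 * (A - B)) :=
          Complex.abs.add_le _ _
      _ ≤ Complex.abs (u ^ 4 / 6 - A) + Complex.abs B
          + Complex.abs (u / 2) * Complex.abs (A - B) := by
          rw [map_mul]
          gcongr
          exact (Complex.abs.sub_le_add _ _)
      _ ≤ Complex.abs (u ^ 4 / 6) + Complex.abs A + Complex.abs B
          + Complex.abs (u / 2) * (Complex.abs A + Complex.abs B) := by
          gcongr
          · exact Complex.abs.sub_le_add _ _
          · exact Complex.abs.sub_le_add _ _
      _ = Complex.abs u ^ 4 / 6 + Complex.abs A + Complex.abs B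
          + Complex.abs u / 2 * (Complex.abs A + Complex.abs B) := by
          rw [map_div₀, map_div₀, map_pow]
          rw [show Complex.abs 6 = 6 from by change ‖(6:ℂ)‖ = 6; simp, Complex.abs_two]
  refine tri.trans ?_
  have h0 : 0 ≤ Complex.abs u := Complex.abs.nonneg u
  nlinarith [pow_nonneg h0 4, pow_nonneg h0 3]

lemma gC_eq (η : ℝ) (z : ℂ) :
    gC η z = (2 - Complex.exp ((η : ℂ) * z * Complex.I)
        - Complex.exp (-((η : ℂ) * z * Complex.I))
      + ((η : ℂ) * z * Complex.I) / 2 * (Complex.exp ((η : ℂ) * z * Complex.I)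
        - Complex.exp (-((η : ℂ) * z * Complex.I)))) / ((η : ℂ) * z ^ 4) := by
  by_cases hη : (η : ℂ) = 0
  · simp [gC, hη]
  by_cases hz : z = 0
  · simp [gC, hz]
  have hden : (η : ℂ) * z ^ 4 ≠ 0 := mul_ne_zero hη (pow_ne_zero _ hz)
  rw [eq_div_iff hden, gC, Complex.cos, Complex.sin, neg_mul]
  field_simp
  ring

lemma abs_one_sub_cos_le (w : ℂ) (hw : 0 ≤ w.im) :
    Complex.abs (1 - Complex.cos w) ≤ 2 * Real.exp w.im := by
  have h1 : Complex.abs (Complex.cos w) ≤ Real.exp w.im := by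
    rw [Complex.cos.eq_1]
    calc Complex.abs ((Complex.exp (w * Complex.I) + Complex.exp (-w * Complex.I)) / 2)
        ≤ (Complex.abs (Complex.exp (w * Complex.I))
            + Complex.abs (Complex.exp (-w * Complex.I))) / 2 := by
          rw [map_div₀]
          gcongr
          · exact Complex.abs.add_le _ _
          · simp [Complex.abs_two]
      _ ≤ Real.exp w.im := by
          rw [Complex.abs_exp, Complex.abs_exp]
          have e1 : (w * Complex.I).re = -w.im := by simp [Complex.mul_re]
          have e2 : (-w * Complex.I).re = w.im := by simp [Complex.mul_re]
          rw [e1, e2]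
          have := Real.exp_le_exp.2 (by linarith : -w.im ≤ w.im)
          linarith
  calc Complex.abs (1 - Complex.cos w) ≤ 1 + Complex.abs (Complex.cos w) :=
        (Complex.abs.sub_le_add _ _).trans (by rw [map_one])
    _ ≤ 2 * Real.exp w.im := by
        have := Real.one_le_exp hw
        linarith

lemma abs_sin_le (w : ℂ) (hw : 0 ≤ w.im) :
    Complex.abs (Complex.sin w) ≤ Real.exp w.im := by
  rw [Complex.sin.eq_1]
  calc Complex.abs ((Complex.exp (-w * Complex.I) - Complex.exp (w * Complex.I)) * Complex.I / 2)
      ≤ (Complex.abs (Complex.exp (-w * Complex.I))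
          + Complex.abs (Complex.exp (w * Complex.I))) / 2 := by
        rw [map_div₀, map_mul, Complex.abs_I, mul_one]
        gcongr
        · exact Complex.abs.sub_le_add _ _
        · simp [Complex.abs_two]
    _ ≤ Real.exp w.im := by
        rw [Complex.abs_exp, Complex.abs_exp]
        have e1 : (w * Complex.I).re = -w.im := by simp [Complex.mul_re]
        have e2 : (-w * Complex.I).re = w.im := by simp [Complex.mul_re]
        rw [e1, e2]
        have := Real.exp_le_exp.2 (by linarith : -w.im ≤ w.im)
        linarith

lemma gC_decay (η : ℝ) (hη : 0 < η) (z : ℂ) (him : 0 ≤ z.im) (hz : 1 ≤ Complex.abs z) :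
    Complex.abs (gC η z) ≤ (4 / η + 1) * Real.exp (η * z.im) / Complex.abs z ^ 3 := by
  set a := Complex.abs z with ha
  have ha0 : 0 < a := lt_of_lt_of_le one_pos hz
  have hwim : ((η : ℂ) * z).im = η * z.im := by simp [Complex.mul_im]
  have hwim0 : 0 ≤ ((η : ℂ) * z).im := by rw [hwim]; positivity
  set E := Real.exp (η * z.im) with hE
  have hE0 : 0 < E := Real.exp_pos _
  have hcos := abs_one_sub_cos_le ((η : ℂ) * z) hwim0
  have hsin := abs_sin_le ((η : ℂ) * z) hwim0
  rw [hwim] at hcos hsin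
  have habsA : Complex.abs (2 / ((η : ℂ) * z ^ 4) * (1 - Complex.cos ((η : ℂ) * z)))
      ≤ 2 / (η * a ^ 4) * (2 * E) := by
    rw [map_mul, map_div₀, map_mul, map_pow, Complex.abs_ofReal, abs_of_pos hη,
      Complex.abs_two]
    gcongr
  have habsB : Complex.abs (Complex.sin ((η : ℂ) * z) / z ^ 3) ≤ E / a ^ 3 := by
    rw [map_div₀, map_pow]
    gcongr
  have tri : Complex.abs (gC η z)
      ≤ 2 / (η * a ^ 4) * (2 * E) + E / a ^ 3 := by
    rw [gC]
    exact (Complex.abs.sub_le_add _ _).trans (add_le_add habsA habsB)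
  refine tri.trans ?_
  have e1 : 2 / (η * a ^ 4) * (2 * E) = 4 * E / (η * a ^ 4) := by ring
  have e2 : (4 / η + 1) * E / a ^ 3 = 4 * E / (η * a ^ 3) + E / a ^ 3 := by
    field_simp
  rw [e1, e2]
  have h3 : 4 * E / (η * a ^ 4) ≤ 4 * E / (η * a ^ 3) := by
    refine div_le_div_of_nonneg_left (by positivity) (by positivity) ?_
    have : a ^ 3 ≤ a ^ 4 := pow_le_pow_right₀ (by linarith) (by norm_num)
    nlinarith
  linarith

lemma gC_bound_near (η : ℝ) (hη : 0 < η) (z : ℂ) (hz : Complex.abs z ≤ 1 / η) :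
    Complex.abs (gC η z) ≤ η ^ 3 := by
  by_cases h0 : z = 0
  · simp [gC, h0]
    positivity
  have hu : Complex.abs ((η : ℂ) * z * Complex.I) = η * Complex.abs z := by
    rw [map_mul, map_mul, Complex.abs_I, Complex.abs_ofReal, abs_of_pos hη, mul_one]
  have hu1 : Complex.abs ((η : ℂ) * z * Complex.I) ≤ 1 := by
    rw [hu]
    calc η * Complex.abs z ≤ η * (1 / η) := by gcongr
      _ = 1 := by field_simp
  have hphi := phi_bound _ hu1
  rw [gC_eq, map_div₀]
  have hden : Complex.abs ((η : ℂ) * z ^ 4) = η * Complex.abs z ^ 4 := by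
    rw [map_mul, map_pow, Complex.abs_ofReal, abs_of_pos hη]
  rw [hden]
  have hz0 : 0 < Complex.abs z := Complex.abs.pos h0
  rw [hu] at hphi
  calc Complex.abs _ / (η * Complex.abs z ^ 4)
      ≤ (η * Complex.abs z) ^ 4 / (η * Complex.abs z ^ 4) := by gcongr
    _ = η ^ 3 := by field_simp

end Aux

set_option maxHeartbeats 2000000 in
open Filter Topology Set Function in
/-- for `η, τ, d > 0` and `T > η + d`,
`∫_{-∞}^{∞} (e^{i r T}/(r² + τ²)) g(r; η) sin(d r) dr = −(π/(iτ)) e^{-τT} g(iτ; η) sinh(τd)`. -/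
theorem residue_integral_one (η τ d T : ℝ) (hη : 0 < η) (hτ : 0 < τ) (hd : 0 < d)
    (hT : η + d < T) :
    ∫ r : ℝ,
        (Complex.exp (Complex.I * (r : ℂ) * (T : ℂ)) / ((r : ℂ) ^ 2 + (τ : ℂ) ^ 2)) *
          gC η (r : ℂ) * Complex.sin ((d : ℂ) * (r : ℂ)) =
      -((Real.pi : ℂ) / (Complex.I * (τ : ℂ))) * Complex.exp (-(τ : ℂ) * (T : ℂ)) *
        gC η (Complex.I * (τ : ℂ)) * ((Real.sinh (τ * d) : ℝ) : ℂ) := by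
  have hηC : (η : ℂ) ≠ 0 := Complex.ofReal_ne_zero.2 hη.ne'
  have hτC : (τ : ℂ) ≠ 0 := Complex.ofReal_ne_zero.2 hτ.ne'
  have hcne : Complex.I * (τ : ℂ) ≠ 0 := mul_ne_zero Complex.I_ne_zero hτC
  -- the entire extension of gC
  set gE : ℂ → ℂ := Function.update (gC η) 0 (limUnder (𝓝[≠] (0:ℂ)) (gC η)) with hgEdef
  have hgE_eq : ∀ z : ℂ, z ≠ 0 → gE z = gC η z := fun z hz => update_of_ne hz _ _
  have hgC_diff : ∀ z : ℂ, z ≠ 0 → DifferentiableAt ℂ (gC η) z := by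
    intro z hz
    have h1 : DifferentiableAt ℂ (fun z : ℂ => (η : ℂ) * z ^ 4) z := by fun_prop
    have h2 : DifferentiableAt ℂ (fun z : ℂ => Complex.cos ((η : ℂ) * z)) z := by fun_prop
    have h3 : DifferentiableAt ℂ (fun z : ℂ => Complex.sin ((η : ℂ) * z)) z := by fun_prop
    refine DifferentiableAt.sub (DifferentiableAt.mul ?_ ?_) (DifferentiableAt.div h3 (by fun_prop) (pow_ne_zero _ hz))
    · exact (differentiableAt_const 2).div h1 (mul_ne_zero hηC (pow_ne_zero _ hz))
    · exact (differentiableAt_const 1).sub h2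
  have hgEdiff : Differentiable ℂ gE := by
    have hball : DifferentiableOn ℂ gE (Metric.ball (0:ℂ) (1/η)) := by
      refine Complex.differentiableOn_update_limUnder_of_bddAbove
        (Metric.ball_mem_nhds 0 (by positivity)) ?_ ?_
      · intro z hz
        exact (hgC_diff z hz.2).differentiableWithinAt
      · refine ⟨η ^ 3, ?_⟩
        rintro x ⟨z, ⟨hz1, _⟩, rfl⟩
        have hz' : Complex.abs z ≤ 1 / η := by
          have := Metric.mem_ball.1 hz1
          rw [Complex.dist_eq, sub_zero] at this
          exact this.le
        simpa [Complex.norm_eq_abs] using gC_bound_near η hη z hz'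
    intro z
    by_cases hz : z = 0
    · subst hz
      exact hball.differentiableAt (Metric.isOpen_ball.mem_nhds (Metric.mem_ball_self (by positivity)))
    · have hev : gC η =ᶠ[𝓝 z] gE := by
        filter_upwards [compl_singleton_mem_nhds hz] with w hw
        exact (hgE_eq w hw).symm
      exact (hgC_diff z hz).congr_of_eventuallyEq hev.symm
  -- the entire numerator
  set h : ℂ → ℂ := fun z => Complex.exp (Complex.I * z * (T : ℂ)) * gE z
      * Complex.sin ((d : ℂ) * z) with hhdef
  have hhdiff : Differentiable ℂ h := by
    refine Differentiable.mul (Differentiable.mul ?_ hgEdiff) ?_ <;> fun_prop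
  obtain ⟨K, hK0, hhdecay⟩ : ∃ K : ℝ, 0 < K ∧
      ∀ z : ℂ, 0 ≤ z.im → 1 ≤ Complex.abs z → ‖h z‖ ≤ K / Complex.abs z ^ 3 := by
    refine ⟨4 / η + 1, by positivity, ?_⟩
    set K : ℝ := 4 / η + 1 with hKdef
    intro z him hz1
    have hz0 : z ≠ 0 := by
      intro hz; rw [hz] at hz1; simp at hz1; linarith
    have ha0 : 0 < Complex.abs z := lt_of_lt_of_le one_pos hz1
    have hexp : Complex.abs (Complex.exp (Complex.I * z * (T : ℂ)))
        = Real.exp (-(T * z.im)) := by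
      rw [Complex.abs_exp]
      congr 1
      simp [Complex.mul_re, Complex.mul_im]
      ring
    have hsin : Complex.abs (Complex.sin ((d : ℂ) * z)) ≤ Real.exp (d * z.im) := by
      have him' : 0 ≤ ((d : ℂ) * z).im := by
        simp [Complex.mul_im]
        positivity
      have := abs_sin_le ((d : ℂ) * z) him'
      simpa [Complex.mul_im] using this
    have hgbd : Complex.abs (gE z) ≤ K * Real.exp (η * z.im) / Complex.abs z ^ 3 := by
      rw [hgE_eq z hz0]
      exact gC_decay η hη z him hz1
    have hnorm : ‖h z‖ = Complex.abs (Complex.exp (Complex.I * z * (T : ℂ)))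
        * Complex.abs (gE z) * Complex.abs (Complex.sin ((d : ℂ) * z)) := by
      rw [hhdef]
      simp [Complex.norm_eq_abs, map_mul]
    rw [hnorm, hexp]
    calc Real.exp (-(T * z.im)) * Complex.abs (gE z) * Complex.abs (Complex.sin ((d:ℂ)*z))
        ≤ Real.exp (-(T * z.im)) * (K * Real.exp (η * z.im) / Complex.abs z ^ 3)
          * Real.exp (d * z.im) := by
          gcongr
      _ = K * Real.exp ((η + d - T) * z.im) / Complex.abs z ^ 3 := by
          have hE : Real.exp (-(T * z.im)) * Real.exp (η * z.im) * Real.exp (d * z.im)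
              = Real.exp ((η + d - T) * z.im) := by
            rw [← Real.exp_add, ← Real.exp_add]
            ring_nf
          rw [← hE]
          ring
      _ ≤ K * 1 / Complex.abs z ^ 3 := by
          gcongr
          exact Real.exp_le_one_iff.2 (by nlinarith)
      _ = K / Complex.abs z ^ 3 := by rw [mul_one]
  -- the function to integrate over the contour
  set c : ℂ := Complex.I * (τ : ℂ) with hcdef
  set F : ℂ → ℂ := fun z => dslope h c z / (z + c) with hFdef
  have hdsl : Differentiable ℂ (dslope h c) := by
    rw [← differentiableOn_univ] at hhdiff ⊢
    exact (Complex.differentiableOn_dslope (univ_mem)).2 hhdiff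
  have hFdiff : ∀ z : ℂ, -(τ/2) < z.im → DifferentiableAt ℂ F z := by
    intro z hz
    have hne : z + c ≠ 0 := by
      intro hzz
      have : (z + c).im = z.im + τ := by simp [hcdef]
      rw [hzz] at this
      simp at this
      linarith
    exact (hdsl z).div (differentiableAt_id.add (differentiableAt_const c)) hne
  -- global decay bound for F on the closed upper half-plane
  set Rb : ℝ := 2 * τ + 2 with hRbdef
  have hRb1 : 1 ≤ Rb := by linarith
  obtain ⟨Hc, hHc0, hHcval⟩ : ∃ Hc : ℝ, 0 ≤ Hc ∧ ‖h c‖ = Hc :=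
    ⟨‖h c‖, norm_nonneg _, rfl⟩
  have habsc : Complex.abs c = τ := by
    rw [hcdef, map_mul, Complex.abs_I, Complex.abs_ofReal, abs_of_pos hτ, one_mul]
  obtain ⟨C₀, hC₀⟩ : ∃ C₀, ∀ z ∈ Metric.closedBall (0:ℂ) Rb ∩ {z : ℂ | 0 ≤ z.im},
      ‖F z‖ ≤ C₀ := by
    refine IsCompact.exists_bound_of_continuousOn
      ((isCompact_closedBall _ _).inter_right (isClosed_le continuous_const Complex.continuous_im))
      fun z hz => ?_
    exact (hFdiff z (by have := hz.2; simp only [Set.mem_setOf_eq] at this; linarith)).continuousAt.continuousWithinAt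
  obtain ⟨C, hC1, hC2⟩ : ∃ C : ℝ, (max C₀ 0) * (1 + Rb ^ 2) ≤ C ∧ 8 * (K + Hc) ≤ C :=
    ⟨max ((max C₀ 0) * (1 + Rb ^ 2)) (8 * (K + Hc)), le_max_left _ _, le_max_right _ _⟩
  have hFC : ∀ z : ℂ, 0 ≤ z.im → ‖F z‖ ≤ C / (1 + Complex.abs z ^ 2) := by
    intro z him
    have hden0 : (0:ℝ) < 1 + Complex.abs z ^ 2 := by positivity
    by_cases hza : Complex.abs z ≤ Rb
    · have h1 : ‖F z‖ ≤ C₀ := by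
        refine hC₀ z ⟨?_, him⟩
        rw [Metric.mem_closedBall, Complex.dist_eq, sub_zero]
        exact hza
      calc ‖F z‖ ≤ C₀ := h1
        _ ≤ max C₀ 0 := le_max_left _ _
        _ ≤ (max C₀ 0) * ((1 + Rb ^ 2) / (1 + Complex.abs z ^ 2)) := by
            have h2 : (1:ℝ) ≤ (1 + Rb ^ 2) / (1 + Complex.abs z ^ 2) := by
              rw [le_div_iff₀ hden0]
              nlinarith [Complex.abs.nonneg z, hRb1]
            nth_rewrite 1 [← mul_one (max C₀ 0)]
            exact mul_le_mul_of_nonneg_left h2 (le_max_right _ _)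
        _ = (max C₀ 0) * (1 + Rb ^ 2) / (1 + Complex.abs z ^ 2) := by ring
        _ ≤ C / (1 + Complex.abs z ^ 2) := by
            gcongr
    · push_neg at hza
      rw [hRbdef] at hza
      obtain ⟨a, hadef⟩ : ∃ a : ℝ, Complex.abs z = a := ⟨_, rfl⟩
      rw [hadef] at hza hden0 ⊢
      have ha1 : 1 ≤ a := by linarith
      have ha0 : 0 < a := by linarith
      have hnz : ‖z‖ = a := by rw [Complex.norm_eq_abs, hadef]
      have hnc : ‖c‖ = τ := by rw [Complex.norm_eq_abs, habsc]
      have hzc : z ≠ c := by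
        intro hzz
        rw [hzz, habsc] at hadef
        rw [← hadef] at hza
        linarith
      have hd1 : a / 2 ≤ ‖z - c‖ := by
        have h3 := norm_sub_norm_le z c
        rw [hnz, hnc] at h3
        linarith
      have hd2 : a / 2 ≤ ‖z + c‖ := by
        have h3 := norm_sub_norm_le z (-c)
        rw [sub_neg_eq_add, hnz, norm_neg, hnc] at h3
        linarith
      have hnum : ‖h z - h c‖ ≤ K + Hc := by
        calc ‖h z - h c‖ ≤ ‖h z‖ + Hc := by
              rw [← hHcval]
              exact norm_sub_le _ _
          _ ≤ K / a ^ 3 + Hc := by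
              refine add_le_add ?_ le_rfl
              rw [← hadef]
              exact (hhdecay z him (by rw [hadef]; exact ha1)).trans (by rw [hadef])
          _ ≤ K + Hc := by
              have h4 : K / a ^ 3 ≤ K := div_le_self hK0.le (one_le_pow₀ ha1)
              linarith
      have hds : ‖dslope h c z‖ = ‖h z - h c‖ / ‖z - c‖ := by
        rw [dslope_of_ne _ hzc, slope_def_field, norm_div]
      have hFz : ‖F z‖ = ‖h z - h c‖ / ‖z - c‖ / ‖z + c‖ := by
        rw [hFdef]
        simp only [norm_div]
        rw [hds]
      rw [hFz]
      have hq : ‖h z - h c‖ / ‖z - c‖ / ‖z + c‖ ≤ (K + Hc) / (a / 2) / (a / 2) := by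
        gcongr
        all_goals positivity
      refine hq.trans ?_
      have he : (K + Hc) / (a / 2) / (a / 2) = 4 * (K + Hc) / a ^ 2 := by
        field_simp
        ring
      rw [he]
      calc 4 * (K + Hc) / a ^ 2 ≤ 8 * (K + Hc) / (1 + a ^ 2) := by
            rw [div_le_div_iff₀ (by positivity) hden0]
            have h6 : (0:ℝ) ≤ a ^ 2 - 1 := by nlinarith [ha1, ha0]
            have h5 : (0:ℝ) ≤ (K + Hc) * (a ^ 2 - 1) :=
              mul_nonneg (by linarith) h6
            nlinarith [h5]
        _ ≤ C / (1 + a ^ 2) := by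
            gcongr
  -- the contour integral vanishes
  have hFint0 : ∫ r : ℝ, F (r : ℂ) = 0 :=
    contour_vanish F (τ/2) C (by positivity) hFdiff hFC
  -- the Poisson kernel integral
  have hker : ∀ r : ℝ, ((r:ℂ)^2 + (τ:ℂ)^2) = (((r^2 + τ^2 : ℝ)) : ℂ) := by
    intro r; push_cast; ring
  have hrealfun : (fun r : ℝ => (r^2 + τ^2)⁻¹) = fun r : ℝ => (τ^2)⁻¹ * (1 + (r/τ)^2)⁻¹ := by
    funext r
    rw [← mul_inv]
    congr 1
    field_simp
    ring
  have hrealint : Integrable fun r : ℝ => (r^2 + τ^2)⁻¹ := by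
    rw [hrealfun]
    exact (integrable_inv_one_add_sq.comp_div hτ.ne').const_mul _
  have hrealval : ∫ r : ℝ, (r^2 + τ^2)⁻¹ = Real.pi / τ := by
    rw [hrealfun, MeasureTheory.integral_const_mul]
    have h7 : ∫ r : ℝ, (1 + (r/τ)^2)⁻¹ = |τ| • ∫ y : ℝ, (1 + y^2)⁻¹ :=
      MeasureTheory.Measure.integral_comp_div (fun y => (1 + y^2)⁻¹) τ
    rw [h7, integral_univ_inv_one_add_sq, abs_of_pos hτ, smul_eq_mul]
    field_simp
  have hCint : Integrable fun r : ℝ => ((r:ℂ)^2 + (τ:ℂ)^2)⁻¹ := by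
    refine Integrable.congr (hrealint.ofReal (𝕜 := ℂ)) (Eventually.of_forall fun r => ?_)
    show (((r^2 + τ^2 : ℝ)⁻¹ : ℝ) : ℂ) = ((r:ℂ)^2 + (τ:ℂ)^2)⁻¹
    rw [Complex.ofReal_inv, hker r]
  have hCval : ∫ r : ℝ, ((r:ℂ)^2 + (τ:ℂ)^2)⁻¹ = ((Real.pi / τ : ℝ) : ℂ) := by
    calc ∫ r : ℝ, ((r:ℂ)^2+(τ:ℂ)^2)⁻¹ = ∫ r : ℝ, (((r^2+τ^2 : ℝ)⁻¹ : ℝ) : ℂ) := by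
          congr 1
          funext r
          rw [Complex.ofReal_inv, hker r]
      _ = ((∫ r : ℝ, (r^2+τ^2)⁻¹ : ℝ) : ℂ) := integral_ofReal
      _ = ((Real.pi / τ : ℝ) : ℂ) := by rw [hrealval]
  -- splitting the integrand
  have hsplit : ∀ r : ℝ, r ≠ 0 →
      (Complex.exp (Complex.I * (r:ℂ) * (T:ℂ)) / ((r:ℂ)^2 + (τ:ℂ)^2)) * gC η (r:ℂ)
        * Complex.sin ((d:ℂ) * (r:ℂ))
      = F (r:ℂ) + h c * ((r:ℂ)^2 + (τ:ℂ)^2)⁻¹ := by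
    intro r hr
    have hrc : (r:ℂ) ≠ c := by
      intro hh2
      have h8 : ((r:ℂ)).im = c.im := by rw [hh2]
      rw [hcdef] at h8
      simp at h8
      exact hτ.ne' h8.symm
    have hminus : (r:ℂ) - c ≠ 0 := sub_ne_zero.2 hrc
    have hplus : (r:ℂ) + c ≠ 0 := by
      intro hh2
      have h8 : ((r:ℂ) + c).im = τ := by rw [hcdef]; simp
      rw [hh2] at h8
      simp at h8
      exact hτ.ne' h8.symm
    have hfact : ((r:ℂ) - c) * ((r:ℂ) + c) = (r:ℂ)^2 + (τ:ℂ)^2 := by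
      rw [hcdef]
      linear_combination (-(τ:ℂ)^2) * Complex.I_sq
    have hFr : F (r:ℂ) = (h (r:ℂ) - h c) / ((r:ℂ) - c) / ((r:ℂ) + c) := by
      rw [hFdef]
      simp only
      rw [dslope_of_ne _ hrc, slope_def_field]
    have hhr : h (r:ℂ) = Complex.exp (Complex.I*(r:ℂ)*(T:ℂ)) * gC η (r:ℂ)
        * Complex.sin ((d:ℂ)*(r:ℂ)) := by
      rw [hhdef]
      simp only
      rw [hgE_eq _ (Complex.ofReal_ne_zero.2 hr)]
    rw [hFr, ← hfact, hhr]
    field_simp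
    ring
  -- integrability of F on the real line
  have hFcont : Continuous fun r : ℝ => F (r:ℂ) := by
    refine continuous_iff_continuousAt.2 fun r => ?_
    refine ((hFdiff r ?_).continuousAt).comp Complex.continuous_ofReal.continuousAt
    simp only [Complex.ofReal_im]
    linarith
  have hFint : Integrable fun r : ℝ => F (r:ℂ) := integrable_of_decay F C hFcont hFC
  have hGint : Integrable fun r : ℝ => h c * ((r:ℂ)^2 + (τ:ℂ)^2)⁻¹ := hCint.const_mul _
  have hgEc : gE c = gC η c := hgE_eq c hcne
  have harg1 : Complex.I * c * (T:ℂ) = -(τ:ℂ) * (T:ℂ) := by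
    rw [hcdef]
    linear_combination (τ:ℂ)*(T:ℂ)*Complex.I_sq
  have harg2 : Complex.sin ((d:ℂ) * c) = ((Real.sinh (τ*d) : ℝ) : ℂ) * Complex.I := by
    rw [hcdef]
    have h9 : (d:ℂ) * (Complex.I * (τ:ℂ)) = (((τ*d : ℝ)):ℂ) * Complex.I := by
      push_cast
      ring
    rw [h9, Complex.sin_mul_I, Complex.ofReal_sinh]
  have hhc : h c = Complex.exp (-(τ:ℂ) * (T:ℂ)) * gC η c
      * (((Real.sinh (τ*d) : ℝ) : ℂ) * Complex.I) := by
    rw [hhdef]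
    simp only
    rw [harg1, hgEc, harg2]
  calc ∫ r : ℝ, (Complex.exp (Complex.I * (r : ℂ) * (T : ℂ)) / ((r : ℂ) ^ 2 + (τ : ℂ) ^ 2)) *
          gC η (r : ℂ) * Complex.sin ((d : ℂ) * (r : ℂ))
      = ∫ r : ℝ, (F (r:ℂ) + h c * ((r:ℂ)^2 + (τ:ℂ)^2)⁻¹) := by
        refine integral_congr_ae ?_
        have hae : {(0:ℝ)}ᶜ ∈ ae (volume : Measure ℝ) := by
          rw [mem_ae_iff]
          simp
        filter_upwards [hae] with r hr
        exact hsplit r hr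
    _ = (∫ r : ℝ, F (r:ℂ)) + ∫ r : ℝ, h c * ((r:ℂ)^2 + (τ:ℂ)^2)⁻¹ :=
        integral_add hFint hGint
    _ = h c * ((Real.pi / τ : ℝ) : ℂ) := by
        rw [hFint0, MeasureTheory.integral_const_mul, hCval, zero_add]
    _ = -((Real.pi : ℂ) / (Complex.I * (τ : ℂ))) * Complex.exp (-(τ : ℂ) * (T : ℂ)) *
        gC η (Complex.I * (τ : ℂ)) * ((Real.sinh (τ * d) : ℝ) : ℂ) := by
        rw [hhc, hcdef]
        push_cast
        field_simp
        ring_nf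
        rw [Complex.I_sq]
        ring
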